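/- With α = 1.55, for all real a, b, r ≥ 0 satisfying a ≤ b ≤ r, a + b + r ≤ 1, and b ≤ 0.47, we have 2a^α + 2b^α + r^α ≤ 1. -/

import Mathlib

open Real Set

lemma rpow_num_le {x c : ℝ} (hx : 0 ≤ x) (hc : 0 ≤ c) (h : x ^ (31:ℕ) ≤ c ^ (20:ℕ)) :
    x ^ (1.55:ℝ) ≤ c := by
  have h1 : x ^ (1.55:ℝ) = (x ^ (31:ℕ)) ^ ((1:ℝ)/20) := by
    rw [← Real.rpow_natCast x 31, ← Real.rpow_mul hx]
    norm_num
  have h2 : c = (c ^ (20:ℕ)) ^ ((1:ℝ)/20) := by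
    rw [← Real.rpow_natCast c 20, ← Real.rpow_mul hc]
    norm_num
  rw [h1, h2]
  exact Real.rpow_le_rpow (by positivity) h (by norm_num)

lemma secant_bd {p q x Pu Qu : ℝ} (hp : 0 ≤ p) (hpq : p < q) (hx : p ≤ x) (hxq : x ≤ q)
    (hP : p ^ (1.55:ℝ) ≤ Pu) (hQ : q ^ (1.55:ℝ) ≤ Qu) :
    (q - p) * x ^ (1.55:ℝ) ≤ (q - x) * Pu + (x - p) * Qu := by
  have hcv := convexOn_rpow (p := (1.55:ℝ)) (by norm_num)
  have hd : (0:ℝ) < q - p := by linarith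
  have hμ0 : 0 ≤ (q - x) / (q - p) := div_nonneg (by linarith) hd.le
  have hν0 : 0 ≤ (x - p) / (q - p) := div_nonneg (by linarith) hd.le
  have hs : (q - x) / (q - p) + (x - p) / (q - p) = 1 := by
    field_simp
    ring
  have hco : ((q - x) / (q - p)) • p + ((x - p) / (q - p)) • q = x := by
    rw [smul_eq_mul, smul_eq_mul]
    field_simp
    ring
  have hcvx := hcv.2 (mem_Ici.2 hp) (mem_Ici.2 (le_trans hp hpq.le)) hμ0 hν0 hs
  rw [hco] at hcvx
  simp only [smul_eq_mul] at hcvx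
  have h1 : (q - x) / (q - p) * p ^ (1.55:ℝ) ≤ (q - x) / (q - p) * Pu :=
    mul_le_mul_of_nonneg_left hP hμ0
  have h2 : (x - p) / (q - p) * q ^ (1.55:ℝ) ≤ (x - p) / (q - p) * Qu :=
    mul_le_mul_of_nonneg_left hQ hν0
  have key : x ^ (1.55:ℝ) ≤ (q - x) / (q - p) * Pu + (x - p) / (q - p) * Qu := by linarith
  have hm := mul_le_mul_of_nonneg_left key hd.le
  calc (q - p) * x ^ (1.55:ℝ) ≤ (q - p) * ((q - x) / (q - p) * Pu + (x - p) / (q - p) * Qu) := hm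
    _ = (q - x) * Pu + (x - p) * Qu := by field_simp

lemma P3' : ((1:ℝ)/3) ^ (1.55:ℝ) ≤ 0.18217 :=
  rpow_num_le (by norm_num) (by norm_num) (by norm_num)
lemma P23' : ((2:ℝ)/3) ^ (1.55:ℝ) ≤ 0.53341 :=
  rpow_num_le (by norm_num) (by norm_num) (by norm_num)
lemma P4' : (0.4:ℝ) ^ (1.55:ℝ) ≤ 0.24166 :=
  rpow_num_le (by norm_num) (by norm_num) (by norm_num)
lemma P435' : (0.435:ℝ) ^ (1.55:ℝ) ≤ 0.27521 :=
  rpow_num_le (by norm_num) (by norm_num) (by norm_num)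
lemma P47' : (0.47:ℝ) ^ (1.55:ℝ) ≤ 0.31028 :=
  rpow_num_le (by norm_num) (by norm_num) (by norm_num)
lemma P565' : (0.565:ℝ) ^ (1.55:ℝ) ≤ 0.41274 :=
  rpow_num_le (by norm_num) (by norm_num) (by norm_num)
lemma P6' : (0.6:ℝ) ^ (1.55:ℝ) ≤ 0.45304 :=
  rpow_num_le (by norm_num) (by norm_num) (by norm_num)
lemma P0' : (0:ℝ) ^ (1.55:ℝ) ≤ 0 :=
  le_of_eq (Real.zero_rpow (by norm_num))
lemma P1' : (1:ℝ) ^ (1.55:ℝ) ≤ 1 :=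
  le_of_eq (Real.one_rpow _)

set_option maxHeartbeats 1000000 in
/-- Case 1 inequality for ternary trees (α = 1.55). -/
theorem stmt7 (α : ℝ) (hα : α = 1.55) :
    ∀ a b r : ℝ, 0 ≤ a → 0 ≤ b → 0 ≤ r → a ≤ b → b ≤ r → a + b + r ≤ 1 → b ≤ 0.47 →
      2 * a ^ α + 2 * b ^ α + r ^ α ≤ 1 := by
  subst hα
  intro a b r ha hb hr hab hbr habr hb47
  have P3 := P3'; have P23 := P23'; have P4 := P4'; have P435 := P435'
  have P47 := P47'; have P565 := P565'; have P6 := P6'; have P0 := P0'; have P1 := P1'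
  -- basic consequences of the constraints
  have hr1 : r ≤ 1 - a - b := by linarith
  have hAB : a + 2 * b ≤ 1 := by linarith
  have ha3 : a ≤ 1/3 := by linarith
  have hs23 : a + b ≤ 2/3 := by linarith
  -- replace r by t := 1 - a - b (monotonicity)
  have hrt : r ^ (1.55:ℝ) ≤ (1 - a - b) ^ (1.55:ℝ) :=
    Real.rpow_le_rpow hr hr1 (by norm_num)
  -- secant bound on a over [0, 1/3]
  have hA : ((1:ℝ)/3 - 0) * a ^ (1.55:ℝ) ≤ (1/3 - a) * 0 + (a - 0) * 0.18217 :=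
    secant_bd le_rfl (by norm_num) ha ha3 P0 P3
  rcases le_or_gt b (1/3) with h1 | h1
  · -- Case 1 : b ≤ 1/3, t ∈ [1/3, 1]
    have hB : ((1:ℝ)/3 - 0) * b ^ (1.55:ℝ) ≤ (1/3 - b) * 0 + (b - 0) * 0.18217 :=
      secant_bd le_rfl (by norm_num) hb h1 P0 P3
    have hT : ((1:ℝ) - 1/3) * (1 - a - b) ^ (1.55:ℝ) ≤
        (1 - (1 - a - b)) * 0.18217 + ((1 - a - b) - 1/3) * 1 :=
      secant_bd (by norm_num) (by norm_num) (by linarith) (by linarith) P3 P1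
    linarith
  · rcases le_or_gt b 0.4 with h2 | h2
    · -- Case 2 : b ∈ [1/3, 0.4], t ∈ [1/3, 2/3]
      have hB : ((0.4:ℝ) - 1/3) * b ^ (1.55:ℝ) ≤ (0.4 - b) * 0.18217 + (b - 1/3) * 0.24166 :=
        secant_bd (by norm_num) (by norm_num) h1.le h2 P3 P4
      have hT : ((2:ℝ)/3 - 1/3) * (1 - a - b) ^ (1.55:ℝ) ≤
          (2/3 - (1 - a - b)) * 0.18217 + ((1 - a - b) - 1/3) * 0.53341 :=
        secant_bd (by norm_num) (by norm_num) (by linarith) (by linarith) P3 P23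
      linarith
    · rcases le_or_gt b 0.435 with h3 | h3
      · -- Case 3 : b ∈ [0.4, 0.435], t ∈ [0.4, 0.6]
        have hB : ((0.435:ℝ) - 0.4) * b ^ (1.55:ℝ) ≤
            (0.435 - b) * 0.24166 + (b - 0.4) * 0.27521 :=
          secant_bd (by norm_num) (by norm_num) h2.le h3 P4 P435
        have hT : ((0.6:ℝ) - 0.4) * (1 - a - b) ^ (1.55:ℝ) ≤
            (0.6 - (1 - a - b)) * 0.24166 + ((1 - a - b) - 0.4) * 0.45304 :=
          secant_bd (by norm_num) (by norm_num) (by linarith) (by linarith) P4 P6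
        linarith
      · -- Case 4 : b ∈ [0.435, 0.47], t ∈ [0.435, 0.565]
        have hB : ((0.47:ℝ) - 0.435) * b ^ (1.55:ℝ) ≤
            (0.47 - b) * 0.27521 + (b - 0.435) * 0.31028 :=
          secant_bd (by norm_num) (by norm_num) h3.le hb47 P435 P47
        have hT : ((0.565:ℝ) - 0.435) * (1 - a - b) ^ (1.55:ℝ) ≤
            (0.565 - (1 - a - b)) * 0.27521 + ((1 - a - b) - 0.435) * 0.41274 :=
          secant_bd (by norm_num) (by norm_num) (by linarith) (by linarith) P435 P565
        linarith
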